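/- Define $a(t) = e^{t + \frac{1}{2}\sin t}$ for $t \in \mathbb{R}$. Then: (i) $a(t) \to 0$ as $t \to -\infty$; (ii) $\ddot a(t) > 0$ for all $t$; (iii) $H(t) := \dot a(t)/a(t) = 1 + \frac{1}{2}\cos t$ satisfies $\frac{1}{2} \le H(t) \le \frac{3}{2}$ for all $t$ but $H(t)$ does not converge as $t \to -\infty$. -/

import Mathlib

open Real Filter

lemma osc_hasDerivAt (t : ℝ) :
    HasDerivAt (fun t : ℝ => Real.exp (t + Real.sin t / 2))
      (Real.exp (t + Real.sin t / 2) * (1 + Real.cos t / 2)) t := by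
  have h : HasDerivAt (fun t : ℝ => t + Real.sin t / 2) (1 + Real.cos t / 2) t :=
    (hasDerivAt_id t).add ((Real.hasDerivAt_sin t).div_const 2)
  exact h.exp

lemma osc_deriv (a : ℝ → ℝ) (ha : a = fun t => Real.exp (t + Real.sin t / 2)) :
    deriv a = fun t => Real.exp (t + Real.sin t / 2) * (1 + Real.cos t / 2) := by
  subst ha
  funext t
  exact (osc_hasDerivAt t).deriv

theorem oscillating_hubble_counterexample
    (a : ℝ → ℝ) (ha : a = fun t => Real.exp (t + Real.sin t / 2)) :
    Tendsto a atBot (nhds 0) ∧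
    (∀ t : ℝ, 0 < deriv (deriv a) t) ∧
    (∀ t : ℝ, deriv a t / a t = 1 + Real.cos t / 2) ∧
    (∀ t : ℝ, 1 / 2 ≤ deriv a t / a t ∧ deriv a t / a t ≤ 3 / 2) ∧
    ¬ ∃ L : ℝ, Tendsto (fun t => deriv a t / a t) atBot (nhds L) := by
  have hd := osc_deriv a ha
  have hH : ∀ t : ℝ, deriv a t / a t = 1 + Real.cos t / 2 := by
    intro t
    rw [hd, ha]
    field_simp [Real.exp_ne_zero]
  refine ⟨?_, ?_, hH, ?_, ?_⟩
  · -- a → 0 at -∞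
    rw [ha]
    have h1 : Tendsto (fun t : ℝ => t + Real.sin t / 2) atBot atBot := by
      apply tendsto_atBot_mono (g := fun t : ℝ => t + Real.sin t / 2) ?_
        (tendsto_atBot_add_const_right _ (1/2 : ℝ) tendsto_id)
      intro t
      have := Real.sin_le_one t
      simp only [id]
      linarith
    exact Real.tendsto_exp_atBot.comp h1
  · -- second derivative positive
    intro t
    rw [hd]
    have h2 : HasDerivAt (fun t : ℝ => Real.exp (t + Real.sin t / 2) * (1 + Real.cos t / 2))
        (Real.exp (t + Real.sin t / 2) * (1 + Real.cos t / 2) * (1 + Real.cos t / 2)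
          + Real.exp (t + Real.sin t / 2) * (-Real.sin t / 2)) t := by
      have hc : HasDerivAt (fun t : ℝ => 1 + Real.cos t / 2) (-Real.sin t / 2) t := by
        exact ((Real.hasDerivAt_cos t).div_const 2).const_add 1
      exact (osc_hasDerivAt t).mul hc
    rw [h2.deriv]
    have he : 0 < Real.exp (t + Real.sin t / 2) := Real.exp_pos _
    have hs := Real.sin_sq_add_cos_sq t
    have key : 0 < (1 + Real.cos t / 2) * (1 + Real.cos t / 2) - Real.sin t / 2 := by
      rcases eq_or_ne (Real.cos t) (-1) with h | h
      · have hs0 : Real.sin t = 0 := by nlinarith [sq_nonneg (Real.sin t)]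
        rw [h, hs0]; norm_num
      · have hne : (1 + Real.cos t) ≠ 0 := fun hc => h (by linarith)
        have hpos : 0 < (1 + Real.cos t) ^ 2 := by positivity
        nlinarith [sq_nonneg (1 - Real.sin t)]
    nlinarith
  · intro t
    rw [hH t]
    have h1 := Real.neg_one_le_cos t
    have h2 := Real.cos_le_one t
    constructor <;> linarith
  · rintro ⟨L, hL⟩
    have hseq1 : Tendsto (fun n : ℕ => -(2 * Real.pi * n)) atTop atBot := by
      apply tendsto_neg_atBot_iff.mpr
      exact Tendsto.const_mul_atTop (by positivity : (0:ℝ) < 2 * Real.pi)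
        tendsto_natCast_atTop_atTop
    have hseq2 : Tendsto (fun n : ℕ => -(Real.pi + 2 * Real.pi * n)) atTop atBot := by
      apply tendsto_neg_atBot_iff.mpr
      apply tendsto_atTop_add_const_left
      exact Tendsto.const_mul_atTop (by positivity : (0:ℝ) < 2 * Real.pi)
        tendsto_natCast_atTop_atTop
    have hL1 : Tendsto (fun n : ℕ => deriv a (-(2 * Real.pi * n)) / a (-(2 * Real.pi * n)))
        atTop (nhds L) := hL.comp hseq1
    have hL2 : Tendsto (fun n : ℕ =>
        deriv a (-(Real.pi + 2 * Real.pi * n)) / a (-(Real.pi + 2 * Real.pi * n)))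
        atTop (nhds L) := hL.comp hseq2
    have e1 : (fun n : ℕ => deriv a (-(2 * Real.pi * n)) / a (-(2 * Real.pi * n)))
        = fun _ : ℕ => (3/2 : ℝ) := by
      funext n
      rw [hH]
      have : Real.cos (-(2 * Real.pi * n)) = 1 := by
        rw [Real.cos_neg]
        have : (2 * Real.pi * n : ℝ) = n * (2 * Real.pi) := by ring
        rw [this, Real.cos_nat_mul_two_pi]
      rw [this]; norm_num
    have e2 : (fun n : ℕ =>
        deriv a (-(Real.pi + 2 * Real.pi * n)) / a (-(Real.pi + 2 * Real.pi * n)))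
        = fun _ : ℕ => (1/2 : ℝ) := by
      funext n
      rw [hH]
      have : Real.cos (-(Real.pi + 2 * Real.pi * n)) = -1 := by
        rw [Real.cos_neg]
        have h : (Real.pi + 2 * Real.pi * n : ℝ) = Real.pi + n * (2 * Real.pi) := by ring
        rw [h, Real.cos_add_nat_mul_two_pi, Real.cos_pi]
      rw [this]; norm_num
    rw [e1] at hL1
    rw [e2] at hL2
    have h32 : L = 3/2 := tendsto_nhds_unique hL1 tendsto_const_nhds
    have h12 : L = 1/2 := tendsto_nhds_unique hL2 tendsto_const_nhds
    rw [h32] at h12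
    norm_num at h12
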